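/- arXiv:1603.04558 — 2 statements merged into one kernel-verified Lean document; each statement's English description precedes it below -/
import Mathlib

section
/- For real numbers $a, b, q > 0$ with $a+b > q$, one has $B(a,b)\cdot{}_3F_2(a,b,q; a+b, q+1; 1) = \frac{q}{ab}\cdot{}_3F_2(1,1,a+b-q; a+1, b+1; 1)$, where $B$ denotes the Beta function and ${}_3F_2$ the generalized hypergeometric series. -/
open Finset

/-- Pochhammer (rising factorial) symbol `(x)_n`. -/
noncomputable def poch (x : ℝ) (n : ℕ) : ℝ := ∏ k ∈ Finset.range n, (x + k)

/-- Generalized hypergeometric series ₃F₂. -/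
noncomputable def F32 (a₁ a₂ a₃ b₁ b₂ z : ℝ) : ℝ :=
  ∑' n : ℕ, (poch a₁ n * poch a₂ n * poch a₃ n) /
    (poch b₁ n * poch b₂ n * n.factorial) * z ^ n

/-- Beta function. -/
noncomputable def Beta (a b : ℝ) : ℝ := Real.Gamma a * Real.Gamma b / Real.Gamma (a + b)

open Filter Topology


lemma poch_zero (x : ℝ) : poch x 0 = 1 := by simp [poch]

lemma poch_succ (x : ℝ) (n : ℕ) : poch x (n+1) = poch x n * (x + n) :=
  Finset.prod_range_succ _ _

lemma poch_pos {x : ℝ} (hx : 0 < x) (n : ℕ) : 0 < poch x n := by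
  refine Finset.prod_pos fun k _ => by positivity

lemma poch_nonneg {x : ℝ} (hx : 0 < x) (n : ℕ) : 0 ≤ poch x n := (poch_pos hx n).le

lemma poch_ne_zero {x : ℝ} (hx : 0 < x) (n : ℕ) : poch x n ≠ 0 := (poch_pos hx n).ne'

lemma poch_add (x : ℝ) (n m : ℕ) : poch x (n + m) = poch x n * poch (x + n) m := by
  induction m with
  | zero => simp [poch_zero]
  | succ m ih =>
      rw [← Nat.add_assoc, poch_succ, ih, poch_succ]
      push_cast
      ring

lemma poch_one_left (n : ℕ) : poch 1 n = n.factorial := by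
  induction n with
  | zero => simp [poch_zero]
  | succ n ih => rw [poch_succ, ih, Nat.factorial_succ]; push_cast; ring

lemma poch_succ' (x : ℝ) (n : ℕ) : poch x (n+1) = x * poch (x+1) n := by
  have := poch_add x 1 n
  simp only [Nat.cast_one] at this
  rw [Nat.add_comm 1 n] at this
  rw [this, poch]
  simp [poch_succ, poch_zero]

lemma telescope_fin' {c x : ℝ} (hc : 0 < c) (hcx : c < x) (M : ℕ) :
    (x - c) * ∑ m ∈ Finset.range M, poch c m / poch x (m+1)
      = 1 - poch c M / poch x M := by
  have hx : 0 < x := hc.trans hcx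
  induction M with
  | zero => simp [poch_zero]
  | succ M ih =>
      rw [Finset.sum_range_succ, mul_add, ih, poch_succ x M, poch_succ c M]
      have h1 : poch x M ≠ 0 := poch_ne_zero hx M
      have h2 : x + (M:ℝ) ≠ 0 := by positivity
      field_simp
      ring

lemma gammaSeq_def (s : ℝ) (n : ℕ) :
    Real.GammaSeq s n = (n:ℝ)^s * n.factorial / poch s (n+1) := rfl

lemma gammaSeq_pos {s : ℝ} (hs : 0 < s) {n : ℕ} (hn : n ≠ 0) : 0 < Real.GammaSeq s n := by
  rw [gammaSeq_def]
  have h1 : (0:ℝ) < (n:ℝ) := by exact_mod_cast Nat.pos_of_ne_zero hn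
  have h2 : (0:ℝ) < poch s (n+1) := poch_pos hs _
  have h3 : (0:ℝ) < (n:ℝ)^s := Real.rpow_pos_of_pos h1 s
  have h4 : (0:ℝ) < (n.factorial : ℝ) := by exact_mod_cast n.factorial_pos
  positivity

lemma poch_eq_gs {s : ℝ} (hs : 0 < s) {M : ℕ} (hM : M ≠ 0) :
    poch s (M+1) = (M:ℝ)^s * M.factorial / Real.GammaSeq s M := by
  have h2 : (0:ℝ) < Real.GammaSeq s M := gammaSeq_pos hs hM
  rw [gammaSeq_def, div_div_eq_mul_div]
  have hne : (M:ℝ)^s * M.factorial ≠ 0 := by positivity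
  rw [mul_comm ((M:ℝ)^s * (M.factorial:ℝ)) (poch s (M+1)), mul_div_assoc, div_self hne, mul_one]

lemma key_ratio {a b c : ℝ} (ha : 0 < a) (hb : 0 < b) (hc : 0 < c) {M : ℕ} (hM : M ≠ 0) :
    poch a (M+1) * poch b (M+1) / (poch c (M+1) * M.factorial)
      = (M:ℝ)^(a+b-c) * (Real.GammaSeq c M / (Real.GammaSeq a M * Real.GammaSeq b M)) := by
  have h1 : (0:ℝ) < (M:ℝ) := by exact_mod_cast Nat.pos_of_ne_zero hM
  rw [poch_eq_gs ha hM, poch_eq_gs hb hM, poch_eq_gs hc hM]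
  have hga := (gammaSeq_pos ha hM).ne'
  have hgb := (gammaSeq_pos hb hM).ne'
  have hgc := (gammaSeq_pos hc hM).ne'
  have hf : ((M.factorial : ℝ)) ≠ 0 := by exact_mod_cast M.factorial_ne_zero
  have hr : (M:ℝ)^(a+b-c) * (M:ℝ)^c = (M:ℝ)^a * (M:ℝ)^b := by
    rw [← Real.rpow_add h1, ← Real.rpow_add h1]; ring_nf
  have hpa : (0:ℝ) < (M:ℝ)^a := Real.rpow_pos_of_pos h1 a
  have hpb : (0:ℝ) < (M:ℝ)^b := Real.rpow_pos_of_pos h1 b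
  have hpc : (0:ℝ) < (M:ℝ)^c := Real.rpow_pos_of_pos h1 c
  field_simp
  linear_combination (-1:ℝ) * hr

lemma gs_ratio_tendsto {a b c : ℝ} (ha : 0 < a) (hb : 0 < b) :
    Tendsto (fun M => Real.GammaSeq c M / (Real.GammaSeq a M * Real.GammaSeq b M)) atTop
      (𝓝 (Real.Gamma c / (Real.Gamma a * Real.Gamma b))) := by
  apply Tendsto.div (Real.GammaSeq_tendsto_Gamma c)
    ((Real.GammaSeq_tendsto_Gamma a).mul (Real.GammaSeq_tendsto_Gamma b))
  exact mul_ne_zero (Real.Gamma_pos_of_pos ha).ne' (Real.Gamma_pos_of_pos hb).ne'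

lemma rpow_nat_tendsto_zero {y : ℝ} (hy : y < 0) :
    Tendsto (fun M : ℕ => (M:ℝ) ^ y) atTop (𝓝 0) := by
  have h : Tendsto (fun x : ℝ => x ^ (-(-y))) atTop (𝓝 0) :=
    tendsto_rpow_neg_atTop (by linarith)
  simpa [Function.comp_def] using h.comp tendsto_natCast_atTop_atTop

lemma L3 {a b c : ℝ} (ha : 0 < a) (hb : 0 < b) (hab : a + b < c) :
    Tendsto (fun M : ℕ => poch a (M+1) * poch b (M+1) / (poch c (M+1) * M.factorial))
      atTop (𝓝 0) := by
  have hc : 0 < c := by linarith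
  have h0 : Tendsto (fun M : ℕ => (M:ℝ)^(a+b-c) *
      (Real.GammaSeq c M / (Real.GammaSeq a M * Real.GammaSeq b M))) atTop (𝓝 0) := by
    have := (rpow_nat_tendsto_zero (y := a+b-c) (by linarith)).mul (gs_ratio_tendsto (c := c) ha hb)
    simpa using this
  apply h0.congr'
  filter_upwards [eventually_ne_atTop 0] with M hM
  exact (key_ratio ha hb hc hM).symm

lemma L2 {a b : ℝ} (ha : 0 < a) (hb : 0 < b) :
    Tendsto (fun M : ℕ => poch a (M+1) * poch b (M+1) / (poch (a+b) (M+1) * M.factorial))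
      atTop (𝓝 (Real.Gamma (a+b) / (Real.Gamma a * Real.Gamma b))) := by
  apply (gs_ratio_tendsto (c := a + b) ha hb).congr'
  filter_upwards [eventually_ne_atTop 0] with M hM
  rw [key_ratio ha hb (by linarith) hM]
  simp

lemma L1 {cc x : ℝ} (hc : 0 < cc) (hcx : cc < x) :
    Tendsto (fun M : ℕ => poch cc M / poch x M) atTop (𝓝 0) := by
  have hx : 0 < x := hc.trans hcx
  rw [← Filter.tendsto_add_atTop_iff_nat 1]
  have h0 : Tendsto (fun M : ℕ => (M:ℝ)^(cc-x) *
      (Real.GammaSeq x M / Real.GammaSeq cc M)) atTop (𝓝 0) := by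
    have hgs : Tendsto (fun M => Real.GammaSeq x M / Real.GammaSeq cc M) atTop
        (𝓝 (Real.Gamma x / Real.Gamma cc)) :=
      Tendsto.div (Real.GammaSeq_tendsto_Gamma x) (Real.GammaSeq_tendsto_Gamma cc)
        (Real.Gamma_pos_of_pos hc).ne'
    have := (rpow_nat_tendsto_zero (y := cc - x) (by linarith)).mul hgs
    simpa using this
  apply h0.congr'
  filter_upwards [eventually_ne_atTop 0] with M hM
  have h1 : (0:ℝ) < (M:ℝ) := by exact_mod_cast Nat.pos_of_ne_zero hM
  rw [poch_eq_gs hc hM, poch_eq_gs hx hM]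
  have hgx := (gammaSeq_pos hx hM).ne'
  have hgc := (gammaSeq_pos hc hM).ne'
  have hf : ((M.factorial : ℝ)) ≠ 0 := by exact_mod_cast M.factorial_ne_zero
  have hr : (M:ℝ)^(cc-x) * (M:ℝ)^x = (M:ℝ)^cc := by
    rw [← Real.rpow_add h1]; ring_nf
  field_simp
  linear_combination hr

lemma Ttel {c x : ℝ} (hc : 0 < c) (hcx : c < x) :
    HasSum (fun m => poch c m / poch x (m+1)) (1 / (x - c)) := by
  have hx : 0 < x := hc.trans hcx
  have hxc : (0:ℝ) < x - c := by linarith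
  have hnn : ∀ m, 0 ≤ poch c m / poch x (m+1) :=
    fun m => div_nonneg (poch_pos hc m).le (poch_pos hx _).le
  have hps : ∀ M, ∑ m ∈ Finset.range M, poch c m / poch x (m+1)
      = (1 - poch c M / poch x M) / (x - c) := by
    intro M
    rw [eq_div_iff hxc.ne', mul_comm, telescope_fin' hc hcx]
  have hbd : ∀ M, ∑ m ∈ Finset.range M, poch c m / poch x (m+1) ≤ 1 / (x - c) := by
    intro M
    have hP : 0 ≤ poch c M / poch x M := div_nonneg (poch_pos hc M).le (poch_pos hx M).le
    rw [hps M, div_le_div_iff₀ hxc hxc]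
    nlinarith
  have hsum : Summable fun m => poch c m / poch x (m+1) :=
    summable_of_sum_range_le hnn hbd
  have hlim : Tendsto (fun M => ∑ m ∈ Finset.range M, poch c m / poch x (m+1)) atTop
      (𝓝 (1 / (x - c))) := by
    simp only [hps]
    have : Tendsto (fun M : ℕ => (1 - poch c M / poch x M) / (x - c)) atTop
        (𝓝 ((1 - 0) / (x - c))) := (tendsto_const_nhds.sub (L1 hc hcx)).div_const _
    simpa using this
  have := hsum.hasSum.tendsto_sum_nat
  have heq := tendsto_nhds_unique this hlim
  rw [← heq]
  exact hsum.hasSum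

lemma S {a b c : ℝ} (ha : 0 < a) (hb : 0 < b) (hab : a + b < c) :
    Summable fun n : ℕ => poch a n * poch b n / (poch c n * n.factorial) := by
  have hc : 0 < c := by linarith
  set p : ℝ := c - a - b with hp
  have hp0 : 0 < p := by simp [hp]; linarith
  set t : ℕ → ℝ := fun n => poch a n * poch b n / (poch c n * n.factorial) with ht
  have htpos : ∀ n, 0 < t n := fun n => by
    have := poch_pos ha n; have := poch_pos hb n; have := poch_pos hc n
    have : (0:ℝ) < n.factorial := by exact_mod_cast n.factorial_pos
    positivity
  set d : ℕ → ℝ := fun n => (2 / p) * n * t n with hd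
  obtain ⟨n₀, hn₀⟩ : ∃ n₀ : ℕ, c + 2 * a * b / p ≤ n₀ := exists_nat_ge _
  have hstep : ∀ n, n₀ ≤ n → t n ≤ d n - d (n + 1) := by
    intro n hn
    have hnn : c + 2 * a * b / p ≤ (n:ℝ) := hn₀.trans (by exact_mod_cast hn)
    have htsucc : t (n+1) = t n * ((a + n) * (b + n)) / ((c + n) * (n + 1)) := by
      simp only [ht]
      rw [poch_succ a, poch_succ b, poch_succ c, Nat.factorial_succ]
      have h1 := poch_ne_zero hc n
      have h2 : ((n.factorial : ℝ)) ≠ 0 := by exact_mod_cast n.factorial_ne_zero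
      have h3 : (0:ℝ) < c + n := by positivity
      have h4 : (0:ℝ) < (n:ℝ) + 1 := by positivity
      push_cast
      field_simp
    have hcn : (0:ℝ) < c + n := by positivity
    have hn1 : (0:ℝ) < (n:ℝ) + 1 := by positivity
    rw [hd]
    simp only
    rw [htsucc]
    have key : (2 / p) * ((p * n - a * b) / (c + n)) ≥ 1 := by
      rw [ge_iff_le, ← sub_nonneg]
      have h2 : 0 ≤ 2 * (p * n - a * b) - p * (c + n) := by
        have : p * (c + 2 * a * b / p) ≤ p * n := by
          apply mul_le_mul_of_nonneg_left hnn hp0.le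
        have hexp : p * (c + 2 * a * b / p) = p * c + 2 * a * b := by
          field_simp
        nlinarith
      have : (2 / p) * ((p * n - a * b) / (c + n)) - 1
          = (2 * (p * n - a * b) - p * (c + n)) / (p * (c + n)) := by
        field_simp
      rw [this]
      positivity
    -- d n - d (n+1) = (2/p) * t n * (p*n - a*b)/(c+n)
    have hdd : (2 / p) * (n:ℝ) * t n - (2 / p) * ((n:ℕ)+1 : ℝ) *
        (t n * ((a + n) * (b + n)) / ((c + n) * ((n:ℝ) + 1)))
        = t n * ((2 / p) * ((p * n - a * b) / (c + n))) := by
      field_simp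
      ring
    push_cast
    push_cast at hdd
    rw [hdd]
    nth_rewrite 1 [← mul_one (t n)]
    exact mul_le_mul_of_nonneg_left key (htpos n).le
  -- partial sums bounded
  have hdnn : ∀ n, 0 ≤ d n := fun n => by
    have := (htpos n).le
    have : (0:ℝ) ≤ (n:ℝ) := n.cast_nonneg
    positivity
  have hbound : ∀ N, n₀ ≤ N → ∑ i ∈ Finset.range N, t i + d N
      ≤ ∑ i ∈ Finset.range n₀, t i + d n₀ := by
    intro N hN
    induction N, hN using Nat.le_induction with
    | base => exact le_refl _
    | succ N hN ih =>
        rw [Finset.sum_range_succ]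
        have := hstep N hN
        linarith
  refine summable_of_sum_range_le (c := ∑ i ∈ Finset.range n₀, t i + d n₀)
    (fun n => (htpos n).le) (fun N => ?_)
  rcases le_or_gt n₀ N with h | h
  · have := hbound N h
    have := hdnn N
    linarith
  · calc ∑ i ∈ Finset.range N, t i ≤ ∑ i ∈ Finset.range n₀, t i := by
          apply Finset.sum_le_sum_of_subset_of_nonneg
          · exact Finset.range_subset_range.mpr h.le
          · intro i _ _; exact (htpos i).le
        _ ≤ _ := by have := hdnn n₀; linarith

lemma poch_mono {c c' : ℝ} (hc : 0 < c) (h : c ≤ c') (n : ℕ) : poch c n ≤ poch c' n := by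
  apply Finset.prod_le_prod
  · intro k _; positivity
  · intro k _; linarith

section Gauss
variable {a b : ℝ} (ha : 0 < a) (hb : 0 < b)

/-- terms of the Gauss series with `c = a+b+m+1`. -/
noncomputable def gt' (a b : ℝ) (m n : ℕ) : ℝ :=
  poch a n * poch b n / (poch (a+b+m+1) n * n.factorial)

/-- the Gauss sum. -/
noncomputable def Gm (a b : ℝ) (m : ℕ) : ℝ := ∑' n, gt' a b m n




include ha hb

set_option linter.unusedSectionVars false in
lemma hcm (m : ℕ) : a + b < a+b+(m:ℝ)+1 := by have : (0:ℝ) ≤ (m:ℝ) := m.cast_nonneg; linarith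

lemma gt'_pos (m n : ℕ) : 0 < gt' a b m n := by
  have h1 := poch_pos ha n
  have h2 := poch_pos hb n
  have h3 := poch_pos (show (0:ℝ) < a+b+m+1 by positivity) n
  have h4 : (0:ℝ) < n.factorial := by exact_mod_cast n.factorial_pos
  exact div_pos (by positivity) (by positivity)

lemma gt'_summable (m : ℕ) : Summable (gt' a b m) := S ha hb (hcm ha hb m)

lemma Wlim (m : ℕ) :
    Tendsto (fun n : ℕ => (n:ℝ) * gt' a b m n) atTop (𝓝 0) := by
  rw [← Filter.tendsto_add_atTop_iff_nat 1]
  apply (L3 ha hb (hcm ha hb m)).congr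
  intro M
  unfold gt'
  rw [Nat.factorial_succ]
  have h3 : poch (a+b+m+1) (M+1) ≠ 0 := poch_ne_zero (by positivity) _
  have h4 : ((M.factorial : ℝ)) ≠ 0 := by exact_mod_cast M.factorial_ne_zero
  have h5 : ((M:ℝ)+1) ≠ 0 := by positivity
  push_cast
  field_simp

lemma contiguous (m : ℕ) :
    ((m:ℝ)+1) * (a+b+m+1) * Gm a b m = (b+m+1) * (a+m+1) * Gm a b (m+1) := by
  set c : ℝ := a+b+(m:ℝ)+1 with hc
  have hc0 : 0 < c := by rw [hc]; positivity
  set u : ℕ → ℝ := fun n => ((m:ℝ)+1) * c * gt' a b m n - (b+m+1) * (a+m+1) * gt' a b (m+1) n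
    with hu
  set w : ℕ → ℝ := fun n => c * n * gt' a b m n with hw
  have hw0 : w 0 = 0 := by simp [hw]
  have hid : ∀ n, u n = w n - w (n+1) := by
    intro n
    simp only [hu, hw]
    unfold gt'
    have e1 : poch (a+b+(m:ℝ)+1+1) n = poch (a+b+(m:ℝ)+1) n * ((a+b+m+1) + n) / (a+b+m+1) := by
      have h := poch_succ' (a+b+(m:ℝ)+1) n
      rw [poch_succ] at h
      field_simp at h ⊢
      linarith [h]
    have e2 : poch a (n+1) = poch a n * (a+n) := poch_succ a n
    have e3 : poch b (n+1) = poch b n * (b+n) := poch_succ b n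
    have e4 : poch (a+b+(m:ℝ)+1) (n+1) = poch (a+b+(m:ℝ)+1) n * ((a+b+m+1)+n) := poch_succ _ n
    have e5 : ((m:ℝ)+1+1 : ℝ) = (m:ℝ)+2 := by ring
    have hmc : a+b+((m:ℕ):ℝ)+1+1 = a+b+(((m+1:ℕ)):ℝ)+1 := by push_cast; ring
    rw [← hmc, e1, e2, e3, e4, Nat.factorial_succ]
    have h1 := poch_ne_zero ha n
    have h2 := poch_ne_zero hb n
    have h3 : poch (a+b+(m:ℝ)+1) n ≠ 0 := poch_ne_zero (by positivity) n
    have h4 : ((n.factorial : ℝ)) ≠ 0 := by exact_mod_cast n.factorial_ne_zero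
    have h5 : ((n:ℝ)+1) ≠ 0 := by positivity
    have h6 : (a+b+(m:ℝ)+1) ≠ 0 := by positivity
    have h7 : (a+b+(m:ℝ)+1+(n:ℝ)) ≠ 0 := by positivity
    push_cast
    field_simp
    ring
  -- sum of u via summability
  have hs1 := gt'_summable ha hb m
  have hs2 := gt'_summable ha hb (m+1)
  have hU : HasSum u (((m:ℝ)+1) * c * Gm a b m - (b+m+1) * (a+m+1) * Gm a b (m+1)) := by
    exact (hs1.hasSum.mul_left _).sub (hs2.hasSum.mul_left _)
  -- partial sums of u telescope
  have hps : ∀ N, ∑ n ∈ Finset.range N, u n = - w N := by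
    intro N
    calc ∑ n ∈ Finset.range N, u n = ∑ n ∈ Finset.range N, (w n - w (n+1)) :=
          Finset.sum_congr rfl (fun n _ => hid n)
      _ = w 0 - w N := Finset.sum_range_sub' w N
      _ = - w N := by rw [hw0]; ring
  have hwlim : Tendsto (fun N => - w N) atTop (𝓝 0) := by
    have : Tendsto w atTop (𝓝 (c * 0)) := by
      have := (Wlim ha hb m).const_mul c
      simpa [hw, mul_assoc] using this
    rw [mul_zero] at this
    simpa using this.neg
  have h1 : Tendsto (fun N => ∑ n ∈ Finset.range N, u n) atTop (𝓝 0) := by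
    simp only [hps]; exact hwlim
  have := tendsto_nhds_unique hU.tendsto_sum_nat h1
  linarith [this]


lemma gt'_zero (m : ℕ) : gt' a b m 0 = 1 := by
  simp [gt', poch_zero]

lemma Gm_ge_one (m : ℕ) : 1 ≤ Gm a b m := by
  have h := Summable.le_tsum (gt'_summable ha hb m) 0 (fun i _ => (gt'_pos ha hb m i).le)
  rwa [gt'_zero ha hb] at h

lemma gt'_tail_le (m n : ℕ) (hm : 1 ≤ m) :
    gt' a b m (n+1) ≤ ((a+b+2) / (a+b+(m:ℝ)+1)) * gt' a b 1 (n+1) := by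
  set c1 : ℝ := a+b+((1:ℕ):ℝ)+1 with hc1def
  set cm : ℝ := a+b+((m:ℕ):ℝ)+1 with hcmdef
  have hc1 : (0:ℝ) < c1 := by rw [hc1def]; positivity
  have hcm0 : (0:ℝ) < cm := by rw [hcmdef]; positivity
  have hle : c1 ≤ cm := by
    rw [hc1def, hcmdef]
    have : (1:ℝ) ≤ (m:ℝ) := by exact_mod_cast hm
    push_cast
    linarith
  have key : cm * poch c1 (n+1) ≤ c1 * poch cm (n+1) := by
    rw [poch_succ' c1 n, poch_succ' cm n]
    have hmono : poch (c1+1) n ≤ poch (cm+1) n := poch_mono (by positivity) (by linarith) n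
    have hpos : (0:ℝ) < poch (c1+1) n := poch_pos (by positivity) n
    have := mul_le_mul_of_nonneg_left hmono (by positivity : (0:ℝ) ≤ c1 * cm)
    nlinarith [this]
  have hc1e : c1 = a+b+2 := by rw [hc1def]; push_cast; ring
  unfold gt'
  rw [← hc1def, ← hcmdef, ← hc1e]
  have hX : (0:ℝ) < poch a (n+1) * poch b (n+1) := mul_pos (poch_pos ha _) (poch_pos hb _)
  have hf : (0:ℝ) < (((n+1).factorial : ℕ) : ℝ) := by exact_mod_cast (n+1).factorial_pos
  have hp1 : (0:ℝ) < poch c1 (n+1) := poch_pos hc1 _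
  have hpm : (0:ℝ) < poch cm (n+1) := poch_pos hcm0 _
  rw [div_mul_div_comm, div_le_div_iff₀ (by positivity) (by positivity)]
  have hmul := mul_le_mul_of_nonneg_left key
    (by positivity : (0:ℝ) ≤ poch a (n+1) * poch b (n+1) * ((n+1).factorial : ℝ))
  nlinarith [hmul]

lemma Gm_eq_one_add (m : ℕ) : Gm a b m = 1 + ∑' n, gt' a b m (n+1) := by
  rw [Gm, Summable.tsum_eq_zero_add (gt'_summable ha hb m), gt'_zero ha hb]

lemma tail_summable (m : ℕ) : Summable (fun n => gt' a b m (n+1)) :=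
  (summable_nat_add_iff 1).mpr (gt'_summable ha hb m)

lemma Gm_upper (m : ℕ) (hm : 1 ≤ m) :
    Gm a b m ≤ 1 + ((a+b+2) / (a+b+(m:ℝ)+1)) * ∑' n, gt' a b 1 (n+1) := by
  rw [Gm_eq_one_add ha hb m]
  have h1 : ∑' n, gt' a b m (n+1)
      ≤ ∑' n, ((a+b+2) / (a+b+(m:ℝ)+1)) * gt' a b 1 (n+1) := by
    apply Summable.tsum_le_tsum (fun n => gt'_tail_le ha hb m n hm) (tail_summable ha hb m)
    exact (tail_summable ha hb 1).mul_left _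
  rw [tsum_mul_left] at h1
  linarith

lemma Gm_tendsto_one : Tendsto (Gm a b) atTop (𝓝 1) := by
  set T : ℝ := ∑' n, gt' a b 1 (n+1) with hT
  have hr : Tendsto (fun m : ℕ => (a+b+2) / (a+b+(m:ℝ)+1)) atTop (𝓝 0) := by
    apply Tendsto.div_atTop (tendsto_const_nhds)
    have h1 : Tendsto (fun m : ℕ => (m:ℝ) + (a+b+1)) atTop atTop :=
      tendsto_atTop_add_const_right _ _ tendsto_natCast_atTop_atTop
    apply h1.congr
    intro m; ring
  have hupper : Tendsto (fun m : ℕ => 1 + ((a+b+2) / (a+b+(m:ℝ)+1)) * T) atTop (𝓝 1) := by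
    have := (hr.mul_const T).const_add 1
    simpa using this
  apply tendsto_of_tendsto_of_tendsto_of_le_of_le' tendsto_const_nhds hupper
  · filter_upwards with m using Gm_ge_one ha hb m
  · filter_upwards [eventually_ge_atTop 1] with m hm using Gm_upper ha hb m hm

lemma H_const (m : ℕ) :
    Gm a b m * (poch a (m+1) * poch b (m+1) / (poch (a+b) (m+1) * m.factorial))
      = Gm a b 0 * (poch a 1 * poch b 1 / (poch (a+b) 1 * (0:ℕ).factorial)) := by
  induction m with
  | zero => rfl
  | succ m ih =>
      rw [← ih]
      have eqc := contiguous ha hb m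
      set A : ℝ := ((m:ℝ)+1) * (a+b+(m:ℝ)+1) with hA
      set B : ℝ := (b+(m:ℝ)+1) * (a+(m:ℝ)+1) with hB
      have hApos : (0:ℝ) < A := by rw [hA]; positivity
      have hBpos : (0:ℝ) < B := by rw [hB]; positivity
      set Q1 : ℝ := poch a (m+1+1) * poch b (m+1+1) / (poch (a+b) (m+1+1) * (m+1).factorial)
        with hQ1
      set Q0 : ℝ := poch a (m+1) * poch b (m+1) / (poch (a+b) (m+1) * m.factorial) with hQ0
      have hQrec : Q1 * A = Q0 * B := by
        rw [hQ1, hQ0, hA, hB, poch_succ a (m+1), poch_succ b (m+1), poch_succ (a+b) (m+1),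
          Nat.factorial_succ]
        have h1 := poch_ne_zero ha (m+1)
        have h2 := poch_ne_zero hb (m+1)
        have h3 := poch_ne_zero (show (0:ℝ) < a+b by positivity) (m+1)
        have h4 : ((m.factorial : ℕ) : ℝ) ≠ 0 := by exact_mod_cast m.factorial_ne_zero
        have h5 : ((m:ℝ)+1) ≠ 0 := by positivity
        push_cast
        field_simp
        ring
      have h3 : B * (Gm a b (m+1) * Q1) = B * (Gm a b m * Q0) := by
        linear_combination (-Q1) * eqc + Gm a b m * hQrec
      exact mul_left_cancel₀ hBpos.ne' h3

lemma gauss_eval (m : ℕ) :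
    Gm a b m = (Real.Gamma (a+b) / (Real.Gamma a * Real.Gamma b))
      * (poch (a+b) (m+1) * m.factorial / (poch a (m+1) * poch b (m+1))) := by
  have hHlim : Tendsto
      (fun m : ℕ => Gm a b m * (poch a (m+1) * poch b (m+1) / (poch (a+b) (m+1) * m.factorial)))
      atTop (𝓝 (1 * (Real.Gamma (a+b) / (Real.Gamma a * Real.Gamma b)))) :=
    (Gm_tendsto_one ha hb).mul (L2 ha hb)
  have hHconst : Tendsto
      (fun m : ℕ => Gm a b m * (poch a (m+1) * poch b (m+1) / (poch (a+b) (m+1) * m.factorial)))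
      atTop (𝓝 (Gm a b 0 * (poch a 1 * poch b 1 / (poch (a+b) 1 * (0:ℕ).factorial)))) := by
    have : (fun m : ℕ => Gm a b m * (poch a (m+1) * poch b (m+1) /
        (poch (a+b) (m+1) * m.factorial)))
        = fun _ : ℕ => Gm a b 0 * (poch a 1 * poch b 1 / (poch (a+b) 1 * (0:ℕ).factorial)) :=
      funext (fun m => H_const ha hb m)
    rw [this]
    exact tendsto_const_nhds
  have huniq := tendsto_nhds_unique hHconst hHlim
  have hm := (H_const ha hb m).trans huniq
  rw [one_mul] at hm
  rw [← hm]
  have h1 := poch_ne_zero ha (m+1)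
  have h2 := poch_ne_zero hb (m+1)
  have h3 := poch_ne_zero (show (0:ℝ) < a+b by positivity) (m+1)
  have h4 : ((m.factorial : ℕ) : ℝ) ≠ 0 := by exact_mod_cast m.factorial_ne_zero
  field_simp

end Gauss

theorem stmt0 (a b q : ℝ) (ha : 0 < a) (hb : 0 < b) (hq : 0 < q) (hab : q < a + b) :
    Beta a b * F32 a b q (a + b) (q + 1) 1
      = q / (a * b) * F32 1 1 (a + b - q) (a + 1) (b + 1) 1 := by
  set c₀ : ℝ := a + b - q with hc₀def
  have hc₀ : 0 < c₀ := by rw [hc₀def]; linarith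
  have hab0 : (0:ℝ) < a + b := by linarith
  set f : ℕ → ℕ → ℝ := fun n m =>
    poch a n * poch b n * poch c₀ m / (poch (a+b) (n+m+1) * n.factorial) with hfdef
  set A : ℕ → ℝ := fun n => poch a n * poch b n / (poch (a+b) n * n.factorial) with hAdef
  -- nonnegativity
  have hfnn : ∀ n m, 0 ≤ f n m := by
    intro n m
    have h1 := (poch_pos ha n).le
    have h2 := (poch_pos hb n).le
    have h3 := (poch_pos hc₀ m).le
    have h4 := (poch_pos hab0 (n+m+1)).le
    have h5 : (0:ℝ) ≤ n.factorial := by exact_mod_cast (n.factorial_pos).le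
    simp only [hfdef]
    positivity
  -- rows
  have hrowHasSum : ∀ n : ℕ, HasSum (fun m => f n m) (A n / (q + n)) := by
    intro n
    have hx : c₀ < a + b + n := by
      have : (0:ℝ) ≤ (n:ℝ) := n.cast_nonneg
      rw [hc₀def]; linarith
    have h := (Ttel hc₀ hx).mul_left (A n)
    have hqn : a + b + (n:ℝ) - c₀ = q + n := by rw [hc₀def]; ring
    rw [hqn] at h
    have hcongr : ∀ m, A n * (poch c₀ m / poch (a+b+(n:ℝ)) (m+1)) = f n m := by
      intro m
      simp only [hAdef, hfdef]
      have hsplit : poch (a+b) (n+m+1) = poch (a+b) n * poch (a+b+(n:ℝ)) (m+1) := by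
        rw [Nat.add_assoc]
        exact poch_add (a+b) n (m+1)
      rw [hsplit]
      have h1 := poch_ne_zero hab0 n
      have h2 := poch_ne_zero (show (0:ℝ) < a+b+(n:ℝ) by positivity) (m+1)
      have h3 : ((n.factorial : ℕ):ℝ) ≠ 0 := by exact_mod_cast n.factorial_ne_zero
      field_simp
      all_goals try ring
      all_goals exact Or.inl trivial
    have heq : (fun m => A n * (poch c₀ m / poch (a+b+(n:ℝ)) (m+1))) = fun m => f n m :=
      funext hcongr
    rw [heq] at h
    rwa [mul_one_div] at h
  have hrow : ∀ n, Summable (fun m => f n m) := fun n => (hrowHasSum n).summable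
  have hrowsum : ∀ n, ∑' m, f n m = A n / (q + (n:ℝ)) := fun n => (hrowHasSum n).tsum_eq
  -- summability of the row sums
  have hs1 : Summable (fun n : ℕ => poch a n * poch b n / (poch (a+b+1) n * n.factorial)) :=
    S ha hb (by linarith)
  have hAqnn : ∀ n : ℕ, 0 ≤ A n / (q + (n:ℝ)) := by
    intro n
    have h1 := (poch_pos ha n).le
    have h2 := (poch_pos hb n).le
    have h3 := (poch_pos hab0 n).le
    have h4 : (0:ℝ) ≤ n.factorial := by exact_mod_cast (n.factorial_pos).le
    have h5 : (0:ℝ) < q + n := by positivity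
    simp only [hAdef]
    positivity
  have hAq_le : ∀ n : ℕ, A n / (q + (n:ℝ))
      ≤ (1/q) * (poch a n * poch b n / (poch (a+b+1) n * n.factorial)) := by
    intro n
    have hrel : (a+b) * poch (a+b+1) n = poch (a+b) n * (a+b+(n:ℝ)) := by
      rw [← poch_succ']
      exact poch_succ _ n
    have hP : (0:ℝ) ≤ poch a n * poch b n := by
      have := (poch_pos ha n).le; have := (poch_pos hb n).le; positivity
    have hD := poch_pos hab0 n
    have hD1 := poch_pos (show (0:ℝ) < a+b+1 by linarith) n
    have hF : (0:ℝ) < (n.factorial : ℝ) := by exact_mod_cast n.factorial_pos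
    have hqn : (0:ℝ) < q + n := by positivity
    have habn : (0:ℝ) < a+b+(n:ℝ) := by positivity
    have hineq : q * (a+b+(n:ℝ)) ≤ (a+b) * (q+(n:ℝ)) := by
      have : (0:ℝ) ≤ (n:ℝ) := n.cast_nonneg
      nlinarith
    have hps : poch (a+b+1) n = poch (a+b) n * (a+b+(n:ℝ)) / (a+b) := by
      rw [eq_div_iff hab0.ne']
      linarith [hrel]
    have hsn : (0:ℝ) ≤ poch a n * poch b n / (poch (a+b+1) n * (n.factorial:ℝ)) := by
      positivity
    have heq : A n / (q + (n:ℝ)) = (poch a n * poch b n / (poch (a+b+1) n * (n.factorial:ℝ)))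
        * ((a+b+(n:ℝ)) / ((a+b) * (q+(n:ℝ)))) := by
      simp only [hAdef]
      rw [hps]
      field_simp
    have hfac : (a+b+(n:ℝ)) / ((a+b) * (q+(n:ℝ))) ≤ 1/q := by
      rw [div_le_div_iff₀ (by positivity) hq]
      nlinarith
    rw [heq]
    calc (poch a n * poch b n / (poch (a+b+1) n * (n.factorial:ℝ)))
          * ((a+b+(n:ℝ)) / ((a+b) * (q+(n:ℝ))))
        ≤ (poch a n * poch b n / (poch (a+b+1) n * (n.factorial:ℝ))) * (1/q) :=
          mul_le_mul_of_nonneg_left hfac hsn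
      _ = (1/q) * (poch a n * poch b n / (poch (a+b+1) n * (n.factorial:ℝ))) := by ring
  have hAq_summable : Summable (fun n : ℕ => A n / (q + (n:ℝ))) :=
    Summable.of_nonneg_of_le hAqnn hAq_le (hs1.mul_left (1/q))
  have hunc : Summable (Function.uncurry f) := by
    exact (summable_prod_of_nonneg (fun p => hfnn p.1 p.2)).mpr
      ⟨hrow, hAq_summable.congr (fun n => (hrowsum n).symm)⟩
  -- columns
  have hfcol : ∀ n m, f n m = (poch c₀ m / poch (a+b) (m+1)) * gt' a b m n := by
    intro n m
    simp only [hfdef]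
    unfold gt'
    have hsplit : poch (a+b) (n+m+1) = poch (a+b) (m+1) * poch (a+b+(m:ℝ)+1) n := by
      have h := poch_add (a+b) (m+1) n
      have hnat : (m+1) + n = n+m+1 := by omega
      rw [hnat] at h
      rw [h]
      have hcast : a+b+(((m+1):ℕ):ℝ) = a+b+(m:ℝ)+1 := by push_cast; ring
      rw [hcast]
    rw [hsplit]
    have h2 := poch_ne_zero (show (0:ℝ) < a+b+(m:ℝ)+1 by positivity) n
    have h3 : ((n.factorial : ℕ):ℝ) ≠ 0 := by exact_mod_cast n.factorial_ne_zero
    have h4 := poch_ne_zero hab0 (m+1)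
    field_simp
  have hcol : ∀ m, Summable (fun n => f n m) := by
    intro m
    apply Summable.congr ((gt'_summable ha hb m).mul_left (poch c₀ m / poch (a+b) (m+1)))
    intro n
    exact (hfcol n m).symm
  have hcolsum : ∀ m : ℕ, ∑' n, f n m
      = (Real.Gamma (a+b) / (Real.Gamma a * Real.Gamma b))
        * (poch c₀ m * m.factorial / (poch a (m+1) * poch b (m+1))) := by
    intro m
    have h1 : ∑' n, f n m = (poch c₀ m / poch (a+b) (m+1)) * Gm a b m := by
      rw [show (fun n => f n m) = fun n => (poch c₀ m / poch (a+b) (m+1)) * gt' a b m n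
          from funext (fun n => hfcol n m)]
      exact tsum_mul_left
    rw [h1, gauss_eval ha hb m]
    have h2 := poch_ne_zero hab0 (m+1)
    have h3 := poch_ne_zero ha (m+1)
    have h4 := poch_ne_zero hb (m+1)
    field_simp
  have hswap : ∑' n, ∑' m, f n m = ∑' m, ∑' n, f n m :=
    (Summable.tsum_comm' hunc hrow hcol).symm
  -- LHS series
  have hLHS : F32 a b q (a + b) (q + 1) 1 = ∑' n, q * (∑' m, f n m) := by
    unfold F32
    apply tsum_congr
    intro n
    rw [hrowsum n, one_pow, mul_one]
    have hpq : poch q n * (q + (n:ℝ)) = q * poch (q+1) n := by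
      rw [← poch_succ, poch_succ']
    have h1 := poch_ne_zero hab0 n
    have h2 := poch_ne_zero (show (0:ℝ) < q+1 by linarith) n
    have h3 : ((n.factorial : ℕ):ℝ) ≠ 0 := by exact_mod_cast n.factorial_ne_zero
    have h4 : (0:ℝ) < q + (n:ℝ) := by positivity
    have h5 : poch q n / poch (q+1) n = q / (q + (n:ℝ)) := by
      rw [div_eq_div_iff h2 h4.ne']
      exact hpq
    calc poch a n * poch b n * poch q n / (poch (a + b) n * poch (q + 1) n * (n.factorial:ℝ))
        = A n * (poch q n / poch (q+1) n) := by
          simp only [hAdef]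
          field_simp
          all_goals try ring
          all_goals exact Or.inl trivial
      _ = A n * (q / (q+(n:ℝ))) := by rw [h5]
      _ = q * (A n / (q+(n:ℝ))) := by ring
  rw [hLHS, tsum_mul_left, hswap]
  have hSig : ∑' m, ∑' n, f n m
      = (Real.Gamma (a+b) / (Real.Gamma a * Real.Gamma b))
        * ∑' m, (poch c₀ m * (m.factorial:ℝ) / (poch a (m+1) * poch b (m+1))) := by
    rw [tsum_congr hcolsum, tsum_mul_left]
  rw [hSig]
  have hRHS : F32 1 1 c₀ (a + 1) (b + 1) 1
      = (a*b) * ∑' m, (poch c₀ m * (m.factorial:ℝ) / (poch a (m+1) * poch b (m+1))) := by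
    unfold F32
    rw [← tsum_mul_left]
    apply tsum_congr
    intro m
    rw [poch_one_left, one_pow, mul_one]
    have e1 : poch a (m+1) = a * poch (a+1) m := poch_succ' a m
    have e2 : poch b (m+1) = b * poch (b+1) m := poch_succ' b m
    rw [e1, e2]
    have h1 := poch_ne_zero (show (0:ℝ) < a+1 by linarith) m
    have h2 := poch_ne_zero (show (0:ℝ) < b+1 by linarith) m
    have h3 : ((m.factorial:ℕ):ℝ) ≠ 0 := by exact_mod_cast m.factorial_ne_zero
    field_simp
  rw [hRHS]
  have hga := (Real.Gamma_pos_of_pos ha).ne'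
  have hgb := (Real.Gamma_pos_of_pos hb).ne'
  have hgab := (Real.Gamma_pos_of_pos hab0).ne'
  unfold Beta
  field_simp
end

section
/- Let $a, b, q \in (0,1)$ be real with $a > q$ and $b > q$, and $0 < z \le 1$. Under the change of variables $x = t_1$, $y = (1-t_1)/(1-z t_1 t_2)$ on $(0,1)^2$, one has the identity of differential forms $z^q t_1^{a-1} t_2^{q-1} (1-t_1)^{b-1} (1-z t_1 t_2)^{-b} \, dt_1 \, dt_2 = x^{a-q-1} y^{b-q-1} (x + y - 1)^{q-1}\, dx\, dy$ wherever $x+y > 1$; that is, the absolute value of the Jacobian determinant of the inverse map $(x,y) \mapsto (t_1,t_2)$ transforms the integrand as stated. -/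
/-- The pulled-back 2-form identity for the substitution `t₁ = x`,
`t₂ = (x+y-1)/(z·x·y)` (i.e. `y = (1-t₁)/(1-z·t₁·t₂)`).  Since `t₁` does not
depend on `y`, the Jacobian determinant of `(x,y) ↦ (t₁,t₂)` is `∂t₂/∂y`,
which equals `(1-x)/(z·x·y²)`; the absolute value of the Jacobian transforms
the integrand as stated. -/
theorem stmt7 (a b q z x y : ℝ)
    (ha : a ∈ Set.Ioo (0:ℝ) 1) (hb : b ∈ Set.Ioo (0:ℝ) 1) (hq : q ∈ Set.Ioo (0:ℝ) 1)
    (haq : q < a) (hbq : q < b) (hz : 0 < z) (hz1 : z ≤ 1)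
    (hx : x ∈ Set.Ioo (0:ℝ) 1) (hy : y ∈ Set.Ioo (0:ℝ) 1) (hxy : 1 < x + y) :
    HasDerivAt (fun y' : ℝ => (x + y' - 1) / (z * x * y')) ((1 - x) / (z * x * y ^ 2)) y ∧
    (fun t₁ t₂ => z ^ q * t₁ ^ (a - 1) * t₂ ^ (q - 1) * (1 - t₁) ^ (b - 1)
        * (1 - z * t₁ * t₂) ^ (-b)) x ((x + y - 1) / (z * x * y))
      * |(1 - x) / (z * x * y ^ 2)|
    = x ^ (a - q - 1) * y ^ (b - q - 1) * (x + y - 1) ^ (q - 1) := by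
  obtain ⟨hx0, hx1⟩ := hx
  obtain ⟨hy0, hy1⟩ := hy
  have hP : 0 < x + y - 1 := by linarith
  have h1x : 0 < 1 - x := by linarith
  have hzxy : 0 < z * x * y := by positivity
  have hzx : z * x ≠ 0 := by positivity
  constructor
  · have h1 : HasDerivAt (fun y' : ℝ => x + y' - 1) 1 y :=
      ((hasDerivAt_id y).const_add x).sub_const 1
    have h2 : HasDerivAt (fun y' : ℝ => z * x * y') (z * x) y := by
      simpa using (hasDerivAt_id y).const_mul (z * x)
    have := h1.div h2 (by positivity)
    refine this.congr_deriv ?_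
    rw [div_eq_div_iff (by positivity) (by positivity)]
    ring
  · simp only
    have ht : 1 - z * x * ((x + y - 1) / (z * x * y)) = (1 - x) / y := by
      field_simp
      ring
    rw [ht, abs_of_pos (by positivity)]
    have e1 : x ^ (a - q - 1) = x ^ a / (x ^ q * x) := by
      rw [show a - q - 1 = a - (q + 1) by ring, Real.rpow_sub hx0,
        Real.rpow_add hx0, Real.rpow_one]
    have e2 : y ^ (b - q - 1) = y ^ b / (y ^ q * y) := by
      rw [show b - q - 1 = b - (q + 1) by ring, Real.rpow_sub hy0,
        Real.rpow_add hy0, Real.rpow_one]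
    have e3 : (z * x * y) ^ (q - 1) = z ^ q * x ^ q * y ^ q / (z * x * y) := by
      rw [Real.rpow_sub hzxy, Real.rpow_one, Real.mul_rpow (by positivity) hy0.le,
        Real.mul_rpow hz.le hx0.le]
    have e4 : x ^ (a - 1) = x ^ a / x := by rw [Real.rpow_sub hx0, Real.rpow_one]
    have e5 : (1 - x) ^ (b - 1) = (1 - x) ^ b / (1 - x) := by
      rw [Real.rpow_sub h1x, Real.rpow_one]
    have e6 : ((1 - x) / y) ^ (-b) = y ^ b / (1 - x) ^ b := by
      rw [Real.rpow_neg (by positivity), Real.div_rpow h1x.le hy0.le]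
      field_simp
    rw [e1, e2, e4, e5, e6, Real.div_rpow hP.le hzxy.le, e3]
    have hzq : (0:ℝ) < z ^ q := Real.rpow_pos_of_pos hz q
    have hxq : (0:ℝ) < x ^ q := Real.rpow_pos_of_pos hx0 q
    have hxa : (0:ℝ) < x ^ a := Real.rpow_pos_of_pos hx0 a
    have hyq : (0:ℝ) < y ^ q := Real.rpow_pos_of_pos hy0 q
    have hyb : (0:ℝ) < y ^ b := Real.rpow_pos_of_pos hy0 b
    have h1xb : (0:ℝ) < (1-x) ^ b := Real.rpow_pos_of_pos h1x b
    have hPq : (0:ℝ) < (x+y-1) ^ (q-1) := Real.rpow_pos_of_pos hP _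
    field_simp
end
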